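/- For any constraint C ⊆ E₁ × ⋯ × E_k and any i, j ∈ [1..k], the projection functions π_i and π_j associated with C commute: π_j(π_i(X₁,…,X_k)) = π_i(π_j(X₁,…,X_k)) for all tuples (X₁,…,X_k) of subsets of E₁,…,E_k. -/
import Mathlib


/-- The projection function `π_i` of a constraint `C`. -/
def proj {k : ℕ} {E : Fin k → Type*} (C : Set (∀ j, E j)) (i : Fin k)
    (X : ∀ j, Set (E j)) : ∀ j, Set (E j) :=
  Function.update X i {a | ∃ d ∈ C ∩ Set.univ.pi X, d i = a}

lemma inter_pi_proj {k : ℕ} {E : Fin k → Type*} (C : Set (∀ j, E j)) (i : Fin k)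
    (X : ∀ j, Set (E j)) :
    C ∩ Set.univ.pi (proj C i X) = C ∩ Set.univ.pi X := by
  ext d
  simp only [Set.mem_inter_iff, Set.mem_pi, Set.mem_univ, true_implies, proj]
  constructor
  · rintro ⟨hC, h⟩
    refine ⟨hC, fun j => ?_⟩
    by_cases hj : j = i
    · subst hj
      have := h j
      rw [Function.update_self] at this
      obtain ⟨d', ⟨_, hd'⟩, he⟩ := this
      rw [← he]
      exact hd' j
    · have := h j; rwa [Function.update_of_ne hj] at this
  · rintro ⟨hC, h⟩
    refine ⟨hC, fun j => ?_⟩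
    by_cases hj : j = i
    · subst hj
      rw [Function.update_self]
      exact ⟨d, ⟨hC, h⟩, rfl⟩
    · rw [Function.update_of_ne hj]; exact h j

/-- The projection functions `π_i` and `π_j` of a single constraint `C` commute. -/
theorem projections_commute {k : ℕ} {E : Fin k → Type*}
    (C : Set (∀ j, E j)) (i j : Fin k) :
    ∀ X : ∀ j, Set (E j), proj C i (proj C j X) = proj C j (proj C i X) := by
  intro X
  by_cases h : i = j
  · subst h; rfl
  · have e1 : proj C i (proj C j X)
        = Function.update (proj C j X) i {a | ∃ d ∈ C ∩ Set.univ.pi X, d i = a} := by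
      rw [proj, inter_pi_proj]
    have e2 : proj C j (proj C i X)
        = Function.update (proj C i X) j {a | ∃ d ∈ C ∩ Set.univ.pi X, d j = a} := by
      rw [proj, inter_pi_proj]
    rw [e1, e2, proj, proj, Function.update_comm h]
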